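/- Let k be an even positive integer and m a positive integer such that m divides k, gcd(m + 2, k) = 1, gcd(m + 4, k) = 1, and φ(m + 2) = φ(m + 4). Then n = (m + 4)·k/m is a positive integer satisfying φ(n+k) = 2·φ(n), where φ denotes Euler's totient function. -/
import Mathlib


theorem m_plus_two_m_plus_four_solution
    (k m : ℕ) (hk : 0 < k) (hke : Even k) (hm : 0 < m)
    (hdvd : m ∣ k) (hc1 : Nat.gcd (m + 2) k = 1) (hc2 : Nat.gcd (m + 4) k = 1)
    (hphi : Nat.totient (m + 2) = Nat.totient (m + 4)) :
    0 < (m + 4) * k / m ∧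
    Nat.totient ((m + 4) * k / m + k) = 2 * Nat.totient ((m + 4) * k / m) := by
  obtain ⟨t, hk'⟩ := hdvd
  have ht : 0 < t := by
    rcases Nat.eq_zero_or_pos t with h | h
    · simp [hk', h] at hk
    · exact h
  have hn : (m + 4) * k / m = (m + 4) * t := by
    rw [hk', show (m + 4) * (m * t) = m * ((m + 4) * t) by ring,
      Nat.mul_div_cancel_left _ hm]
  -- m+2 is odd
  have h2k : 2 ∣ k := hke.two_dvd
  have hodd : ¬ 2 ∣ (m + 2) := by
    intro h
    have : 2 ∣ Nat.gcd (m + 2) k := Nat.dvd_gcd h h2k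
    rw [hc1] at this; omega
  -- t is even
  have hmodd : ¬ 2 ∣ m := by omega
  have hteven : 2 ∣ t := by
    have : 2 ∣ m * t := hk' ▸ h2k
    rcases (Nat.prime_two.dvd_mul.mp this) with h | h
    · exact absurd h hmodd
    · exact h
  have htk : t ∣ k := ⟨m, by rw [hk']; ring⟩
  have hc1t : Nat.Coprime (m + 2) t := Nat.Coprime.coprime_dvd_right htk hc1
  have hc2t : Nat.Coprime (m + 4) t := Nat.Coprime.coprime_dvd_right htk hc2
  have hc12 : Nat.Coprime (m + 2) 2 := by
    exact Nat.coprime_two_right.mpr (Nat.odd_iff.mpr (by omega))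
  have hc1_2t : Nat.Coprime (m + 2) (2 * t) := Nat.Coprime.mul_right hc12 hc1t
  constructor
  · rw [hn]; positivity
  · rw [hn, hk', show (m + 4) * t + m * t = (m + 2) * (2 * t) by ring,
      Nat.totient_mul hc1_2t, Nat.totient_mul hc2t,
      Nat.totient_mul_of_prime_of_dvd Nat.prime_two hteven, hphi]
    ring
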